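/- d_⋔ ≤ non(N), where d_⋔ is the least cardinality of a ⋔-dominating family in 2^ω and non(N) is the least cardinality of a non-null subset of 2^ω. -/

import Mathlib

open Filter Set MeasureTheory Cardinal

/-- The interval partition of ℕ with |Iₙ| = 2^(n+1): Iₙ = [2^(n+1) - 2, 2^(n+2) - 2). -/
def intervalI (n : ℕ) : Set ℕ := Set.Ico (2 ^ (n + 1) - 2) (2 ^ (n + 2) - 2)

/-- f ⋔ g iff for all but finitely many k, f↾Iₖ ≠ g↾Iₖ. -/
def Fork (f g : ℕ → Bool) : Prop := ∀ᶠ k in atTop, ∃ j ∈ intervalI k, f j ≠ g j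

/-- A measure on Cantor space is the fair-coin product measure iff it is a probability
measure giving each cylinder determined by finitely many coordinates its fair value. -/
def IsFairCoin (μ : Measure (ℕ → Bool)) : Prop :=
  IsProbabilityMeasure μ ∧
  ∀ (s : Finset ℕ) (σ : ℕ → Bool),
    μ {f : ℕ → Bool | ∀ i ∈ s, f i = σ i} = (1 / 2 : ENNReal) ^ s.card

lemma null_nonfork (μ : Measure (ℕ → Bool)) (hμ : IsFairCoin μ) (x : ℕ → Bool) :
    μ {f : ℕ → Bool | ¬ Fork x f} = 0 := by
  set A : ℕ → Set (ℕ → Bool) := fun k =>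
    {f : ℕ → Bool | ∀ i ∈ Finset.Ico (2 ^ (k + 1) - 2) (2 ^ (k + 2) - 2), f i = x i} with hA
  have hcard : ∀ k, (Finset.Ico (2 ^ (k + 1) - 2) (2 ^ (k + 2) - 2)).card = 2 ^ (k + 1) := by
    intro k
    have h1 : 2 ≤ 2 ^ (k + 1) := by
      calc 2 = 2 ^ 1 := rfl
      _ ≤ 2 ^ (k + 1) := Nat.pow_le_pow_right (by norm_num) (by omega)
    have h2 : 2 ^ (k + 2) = 2 * 2 ^ (k + 1) := by ring
    rw [Nat.card_Ico]; omega
  have hμA : ∀ k, μ (A k) = (1 / 2 : ENNReal) ^ (2 ^ (k + 1)) := by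
    intro k
    rw [hA]
    simpa [hcard k] using hμ.2 (Finset.Ico (2 ^ (k + 1) - 2) (2 ^ (k + 2) - 2)) x
  have hsum : (∑' k, μ (A k)) ≠ ⊤ := by
    have hle : ∀ k, μ (A k) ≤ (1 / 2 : ENNReal) ^ k := by
      intro k
      rw [hμA k]
      refine pow_le_pow_of_le_one zero_le (by norm_num) ?_
      calc k ≤ k + 1 := by omega
      _ ≤ 2 ^ (k + 1) := (Nat.lt_two_pow_self).le
    have : (∑' k, μ (A k)) ≤ ∑' k, (1 / 2 : ENNReal) ^ k := ENNReal.tsum_le_tsum hle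
    refine ne_top_of_le_ne_top ?_ this
    rw [ENNReal.tsum_geometric]
    simp
  have hsub : {f : ℕ → Bool | ¬ Fork x f} ⊆ limsup A atTop := by
    intro f hf
    rw [mem_limsup_iff_frequently_mem]
    simp only [Fork, not_eventually] at hf
    refine hf.mono ?_
    intro k hk
    push_neg at hk
    intro i hi
    have := hk i (by simpa [intervalI, Set.mem_Ico] using Finset.mem_Ico.mp hi)
    exact (this).symm
  refine le_antisymm ?_ zero_le
  calc μ {f : ℕ → Bool | ¬ Fork x f} ≤ μ (limsup A atTop) := measure_mono hsub
  _ = 0 := measure_limsup_atTop_eq_zero hsum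

/-- d_⋔ ≤ non(N). -/
theorem stmt10 (μ : Measure (ℕ → Bool)) (hμ : IsFairCoin μ) :
    sInf {c : Cardinal | ∃ D : Set (ℕ → Bool), #D = c ∧
        ∀ x : ℕ → Bool, ∃ f ∈ D, Fork x f} ≤
      sInf {c : Cardinal | ∃ S : Set (ℕ → Bool), #S = c ∧ μ S ≠ 0} := by
  have hprob : IsProbabilityMeasure μ := hμ.1
  refine le_csInf ⟨#(Set.univ : Set (ℕ → Bool)), Set.univ, rfl, by simp⟩ ?_
  rintro c ⟨S, rfl, hS⟩
  refine csInf_le (OrderBot.bddBelow _) ⟨S, rfl, ?_⟩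
  intro x
  by_contra h
  push_neg at h
  have hsub : S ⊆ {f : ℕ → Bool | ¬ Fork x f} := fun f hf => h f hf
  exact hS (le_antisymm ((measure_mono hsub).trans (null_nonfork μ hμ x).le) zero_le)
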